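/- Leave-one-out control variates introduce no bias: ∑_{(c_1,…,c_n) ∈ C^n} (∏_{i=1}^n π θ₀ c_i) * [ (1/n) * ∑_{i=1}^n ( (log (κ θ₀ c_i a*) − v_i) * sc c_i + sa c_i a* ) ] = ∑_c π θ₀ c * ( log (κ θ₀ c a*) * sc c + sa c a* ), where v_i = (1/(n−1)) * ∑_{j ≠ i} log (κ θ₀ c_j a*). -/

import Mathlib

set_option maxHeartbeats 1000000
open Finset

section aux
variable {C : Type*} [Fintype C]

lemma aux_sum_prod {n : ℕ} (h : Fin n → C → ℝ) :
    ∑ cs : Fin n → C, ∏ j, h j (cs j) = ∏ j, ∑ c, h j c :=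
  (Fintype.prod_sum h).symm

lemma aux_marginal_one {n : ℕ} (p F : C → ℝ) (hp : ∑ c, p c = 1) (i : Fin n) :
    ∑ cs : Fin n → C, (∏ j, p (cs j)) * F (cs i) = ∑ c, p c * F c := by
  have key : ∑ cs : Fin n → C, ∏ j, (p (cs j) * (if j = i then F (cs j) else 1))
      = ∏ j, ∑ c, p c * (if j = i then F c else 1) :=
    aux_sum_prod (fun j c => p c * if j = i then F c else 1)
  have h1 : ∀ cs : Fin n → C,
      (∏ j, (p (cs j) * (if j = i then F (cs j) else 1))) = (∏ j, p (cs j)) * F (cs i) := by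
    intro cs
    rw [Finset.prod_mul_distrib, Finset.prod_ite_eq' Finset.univ i (fun j => F (cs j))]
    simp
  have h2 : (∏ j, ∑ c, p c * (if j = i then F c else 1)) = ∑ c, p c * F c := by
    rw [Finset.prod_eq_single i]
    · simp
    · intro j _ hj; simp [hj, hp]
    · simp
  simp only [h1] at key
  rw [key, h2]

lemma aux_marginal_two {n : ℕ} (p F G : C → ℝ) (hp : ∑ c, p c = 1) (i k : Fin n)
    (hik : i ≠ k) :
    ∑ cs : Fin n → C, (∏ j, p (cs j)) * (F (cs i) * G (cs k))
      = (∑ c, p c * F c) * (∑ c, p c * G c) := by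
  have huniv : (Finset.univ : Finset (Fin n))
      = insert i (insert k ((Finset.univ : Finset (Fin n)) \ {i, k})) := by
    ext j; by_cases hj1 : j = i <;> by_cases hj2 : j = k <;> simp [hj1, hj2]
  have hki : i ∉ insert k ((Finset.univ : Finset (Fin n)) \ {i, k}) := by simp [hik]
  have hk2 : k ∉ ((Finset.univ : Finset (Fin n)) \ {i, k}) := by simp
  have key : ∑ cs : Fin n → C,
      ∏ j, (p (cs j) * (if j = i then F (cs j) else if j = k then G (cs j) else 1))
      = ∏ j, ∑ c, p c * (if j = i then F c else if j = k then G c else 1) :=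
    aux_sum_prod (fun j c => p c * if j = i then F c else if j = k then G c else 1)
  have h1 : ∀ cs : Fin n → C,
      (∏ j, (p (cs j) * (if j = i then F (cs j) else if j = k then G (cs j) else 1)))
        = (∏ j, p (cs j)) * (F (cs i) * G (cs k)) := by
    intro cs
    rw [Finset.prod_mul_distrib]
    congr 1
    rw [huniv, Finset.prod_insert hki, Finset.prod_insert hk2, Finset.prod_eq_one]
    · simp [hik, Ne.symm hik]
    · intro j hj
      simp only [Finset.mem_sdiff, Finset.mem_insert, Finset.mem_singleton] at hj
      push_neg at hj
      simp [hj.2.1, hj.2.2]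
  have h2 : (∏ j, ∑ c, p c * (if j = i then F c else if j = k then G c else 1))
      = (∑ c, p c * F c) * (∑ c, p c * G c) := by
    rw [huniv, Finset.prod_insert hki, Finset.prod_insert hk2, Finset.prod_eq_one]
    · simp [hik, Ne.symm hik]
    · intro j hj
      simp only [Finset.mem_sdiff, Finset.mem_insert, Finset.mem_singleton] at hj
      push_neg at hj
      simp [hj.2.1, hj.2.2, hp]
  simp only [h1] at key
  rw [key, h2]

end aux

lemma aux_score_zero {C : Type*} [Fintype C] (θ₀ : ℝ) (π : ℝ → C → ℝ)
    (hπ1 : ∀ θ, ∑ c, π θ c = 1) (hπpos : ∀ c, 0 < π θ₀ c)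
    (hπdiff : ∀ c, DifferentiableAt ℝ (fun θ => π θ c) θ₀) :
    ∑ c, π θ₀ c * deriv (fun θ => Real.log (π θ c)) θ₀ = 0 := by
  have hd : ∀ c, HasDerivAt (fun θ => Real.log (π θ c))
      (deriv (fun θ => π θ c) θ₀ / π θ₀ c) θ₀ := fun c =>
    ((hπdiff c).hasDerivAt).log (ne_of_gt (hπpos c))
  have hsum : HasDerivAt (fun θ => ∑ c, π θ c) (∑ c, deriv (fun θ => π θ c) θ₀) θ₀ :=
    HasDerivAt.fun_sum (fun c _ => (hπdiff c).hasDerivAt)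
  have hconst : HasDerivAt (fun θ => ∑ c, π θ c) 0 θ₀ := by
    have : (fun θ => ∑ c, π θ c) = fun _ => (1 : ℝ) := funext fun θ => hπ1 θ
    rw [this]; exact hasDerivAt_const _ _
  have hzero : ∑ c, deriv (fun θ => π θ c) θ₀ = 0 := hsum.unique hconst
  calc ∑ c, π θ₀ c * deriv (fun θ => Real.log (π θ c)) θ₀
      = ∑ c, deriv (fun θ => π θ c) θ₀ := by
        refine Finset.sum_congr rfl fun c _ => ?_
        rw [(hd c).deriv, mul_comm, div_mul_cancel₀ _ (ne_of_gt (hπpos c))]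
    _ = 0 := hzero

lemma aux_main {C : Type*} [Fintype C] (n : ℕ) (hn : 2 ≤ n) (p ℓ g s : C → ℝ)
    (hp : ∑ c, p c = 1) (hg : ∑ c, p c * g c = 0) :
    ∑ cs : Fin n → C,
        (∏ i, p (cs i)) *
          ((1 / (n : ℝ)) *
            ∑ i, ((ℓ (cs i) - (1 / ((n : ℝ) - 1)) * ∑ j ∈ Finset.univ.erase i, ℓ (cs j))
                * g (cs i) + s (cs i)))
      = ∑ c, p c * (ℓ c * g c + s c) := by
  classical
  have hn0 : (n : ℝ) ≠ 0 := by positivity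
  have expand : ∀ (cs : Fin n → C) (i : Fin n),
      (∏ j, p (cs j)) *
          ((ℓ (cs i) - (1 / ((n : ℝ) - 1)) * ∑ j ∈ Finset.univ.erase i, ℓ (cs j))
            * g (cs i) + s (cs i))
        = (∏ j, p (cs j)) * (ℓ (cs i) * g (cs i) + s (cs i))
          - (1 / ((n : ℝ) - 1)) * ∑ j ∈ Finset.univ.erase i,
              (∏ j', p (cs j')) * (ℓ (cs j) * g (cs i)) := by
    intro cs i
    rw [← Finset.mul_sum, ← Finset.sum_mul]
    ring
  have periT : ∀ i : Fin n,
      ∑ cs : Fin n → C, (∏ j, p (cs j)) *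
          ((ℓ (cs i) - (1 / ((n : ℝ) - 1)) * ∑ j ∈ Finset.univ.erase i, ℓ (cs j))
            * g (cs i) + s (cs i))
        = ∑ c, p c * (ℓ c * g c + s c) := by
    intro i
    simp only [expand]
    rw [Finset.sum_sub_distrib]
    have h2 : ∑ cs : Fin n → C, (1 / ((n : ℝ) - 1)) * ∑ j ∈ Finset.univ.erase i,
        (∏ j', p (cs j')) * (ℓ (cs j) * g (cs i)) = 0 := by
      rw [← Finset.mul_sum, Finset.sum_comm]
      have hz : ∀ j ∈ Finset.univ.erase i,
          ∑ cs : Fin n → C, (∏ j', p (cs j')) * (ℓ (cs j) * g (cs i)) = 0 := by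
        intro j hj
        rw [aux_marginal_two p ℓ g hp j i (Finset.ne_of_mem_erase hj), hg, mul_zero]
      rw [Finset.sum_congr rfl hz, Finset.sum_const, smul_zero, mul_zero]
    rw [h2, sub_zero, aux_marginal_one p (fun c => ℓ c * g c + s c) hp i]
  calc
    ∑ cs : Fin n → C,
        (∏ i, p (cs i)) *
          ((1 / (n : ℝ)) *
            ∑ i, ((ℓ (cs i) - (1 / ((n : ℝ) - 1)) * ∑ j ∈ Finset.univ.erase i, ℓ (cs j))
                * g (cs i) + s (cs i)))
      = ∑ i : Fin n, (1 / (n : ℝ)) * ∑ cs : Fin n → C,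
          (∏ j, p (cs j)) *
            ((ℓ (cs i) - (1 / ((n : ℝ) - 1)) * ∑ j ∈ Finset.univ.erase i, ℓ (cs j))
              * g (cs i) + s (cs i)) := by
        have hcs : ∀ cs : Fin n → C,
            (∏ i, p (cs i)) *
              ((1 / (n : ℝ)) *
                ∑ i, ((ℓ (cs i) - (1 / ((n : ℝ) - 1)) * ∑ j ∈ Finset.univ.erase i, ℓ (cs j))
                    * g (cs i) + s (cs i)))
            = ∑ i : Fin n, (1 / (n : ℝ)) * ((∏ j, p (cs j)) *
                ((ℓ (cs i) - (1 / ((n : ℝ) - 1)) * ∑ j ∈ Finset.univ.erase i, ℓ (cs j))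
                  * g (cs i) + s (cs i))) := by
          intro cs
          rw [Finset.mul_sum, Finset.mul_sum]
          exact Finset.sum_congr rfl fun i _ => by ring
        rw [Finset.sum_congr rfl fun cs _ => hcs cs, Finset.sum_comm]
        exact Finset.sum_congr rfl fun i _ => (Finset.mul_sum _ _ _).symm
    _ = ∑ _i : Fin n, (1 / (n : ℝ)) * ∑ c, p c * (ℓ c * g c + s c) := by
        exact Finset.sum_congr rfl fun i _ => by rw [periT i]
    _ = ∑ c, p c * (ℓ c * g c + s c) := by
        rw [Finset.sum_const, Finset.card_univ, Fintype.card_fin, nsmul_eq_mul]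
        field_simp



/-- Leave-one-out control variates introduce no bias: the expectation of the control-variated
single-sample gradient estimate over `n` i.i.d. chain-of-thoughts equals the expected gradient,
where `v i = (1/(n-1)) * ∑_{j ≠ i} log (κ θ₀ cⱼ a*)`,
`sc c = deriv (fun θ => log (π θ c)) θ₀` and `sa c a = deriv (fun θ => log (κ θ c a)) θ₀`. -/
theorem leave_one_out_control_variate_unbiased
    {C A : Type*} [Fintype C] [Fintype A] [Nonempty C] [Nonempty A]
    (θ₀ : ℝ) (astar : A)
    (π : ℝ → C → ℝ) (κ : ℝ → C → A → ℝ)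
    (hπ0 : ∀ θ c, 0 ≤ π θ c) (hπ1 : ∀ θ, ∑ c, π θ c = 1)
    (hκ0 : ∀ θ c a, 0 ≤ κ θ c a) (hκ1 : ∀ θ c, ∑ a, κ θ c a = 1)
    (hπpos : ∀ c, 0 < π θ₀ c) (hκpos : ∀ c a, 0 < κ θ₀ c a)
    (hπdiff : ∀ c, DifferentiableAt ℝ (fun θ => π θ c) θ₀)
    (hκdiff : ∀ c a, DifferentiableAt ℝ (fun θ => κ θ c a) θ₀)
    (n : ℕ) (hn : 2 ≤ n) :
    ∑ cs : Fin n → C,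
        (∏ i, π θ₀ (cs i)) *
          ((1 / (n : ℝ)) *
            ∑ i,
              ((Real.log (κ θ₀ (cs i) astar) -
                    (1 / ((n : ℝ) - 1)) *
                      ∑ j ∈ Finset.univ.erase i, Real.log (κ θ₀ (cs j) astar)) *
                  deriv (fun θ => Real.log (π θ (cs i))) θ₀ +
                deriv (fun θ => Real.log (κ θ (cs i) astar)) θ₀)) =
      ∑ c, π θ₀ c *
        (Real.log (κ θ₀ c astar) * deriv (fun θ => Real.log (π θ c)) θ₀ +
          deriv (fun θ => Real.log (κ θ c astar)) θ₀) := by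
    exact aux_main n hn (fun c => π θ₀ c) (fun c => Real.log (κ θ₀ c astar))
      (fun c => deriv (fun θ => Real.log (π θ c)) θ₀)
      (fun c => deriv (fun θ => Real.log (κ θ c astar)) θ₀)
      (hπ1 θ₀) (aux_score_zero θ₀ π hπ1 hπpos hπdiff)
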